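/- arXiv:1701.03083 — 4 statements merged into one kernel-verified Lean document; each statement's English description precedes it below -/
import Mathlib

section
/- For all complex numbers u and v, | ū/(1+|u|²) − v̄/(1+|v|²) | ≤ |u − v|. -/
theorem stmt_3 (u v : ℂ) :
    ‖(starRingEnd ℂ) u / (1 + (‖u‖ : ℂ) ^ 2) -
        (starRingEnd ℂ) v / (1 + (‖v‖ : ℂ) ^ 2)‖ ≤
      ‖u - v‖ := by
  set a := ‖u‖ with ha_def
  set b := ‖v‖ with hb_def
  have ha : (0:ℝ) ≤ a := norm_nonneg u
  have hb : (0:ℝ) ≤ b := norm_nonneg v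
  have hApos : (0:ℝ) < 1 + a ^ 2 := by positivity
  have hBpos : (0:ℝ) < 1 + b ^ 2 := by positivity
  have hAc : (1 + (a:ℂ) ^ 2) = ((1 + a ^ 2 : ℝ) : ℂ) := by push_cast; ring
  have hBc : (1 + (b:ℂ) ^ 2) = ((1 + b ^ 2 : ℝ) : ℂ) := by push_cast; ring
  have hA : (1 + (a:ℂ) ^ 2) ≠ 0 := by
    rw [hAc]; exact_mod_cast hApos.ne'
  have hB : (1 + (b:ℂ) ^ 2) ≠ 0 := by
    rw [hBc]; exact_mod_cast hBpos.ne'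
  have hmu : ((a:ℂ)) ^ 2 = u * (starRingEnd ℂ) u := by
    rw [Complex.mul_conj]; norm_cast; exact Complex.sq_norm u
  have hmv : ((b:ℂ)) ^ 2 = v * (starRingEnd ℂ) v := by
    rw [Complex.mul_conj]; norm_cast; exact Complex.sq_norm v
  have key : (starRingEnd ℂ) u / (1 + (a:ℂ) ^ 2) - (starRingEnd ℂ) v / (1 + (b:ℂ) ^ 2)
      = (((starRingEnd ℂ) u - (starRingEnd ℂ) v)
          - (starRingEnd ℂ) u * (starRingEnd ℂ) v * (u - v))
        / ((1 + (a:ℂ) ^ 2) * (1 + (b:ℂ) ^ 2)) := by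
    field_simp
    rw [hmu, hmv]; ring
  rw [key, norm_div, norm_mul, hAc, hBc, Complex.norm_real, Complex.norm_real, Real.norm_eq_abs, Real.norm_eq_abs,
    abs_of_pos hApos, abs_of_pos hBpos]
  rw [div_le_iff₀ (by positivity)]
  have h1 : ‖((starRingEnd ℂ) u - (starRingEnd ℂ) v)
      - (starRingEnd ℂ) u * (starRingEnd ℂ) v * (u - v)‖
      ≤ ‖u - v‖ + a * b * ‖u - v‖ := by
    refine (norm_sub_le _ _).trans ?_
    have e1 : (starRingEnd ℂ) u - (starRingEnd ℂ) v = (starRingEnd ℂ) (u - v) := by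
      simp [map_sub]
    rw [e1, norm_mul, norm_mul, Complex.norm_conj, Complex.norm_conj, Complex.norm_conj]
  refine h1.trans ?_
  have habs : (0:ℝ) ≤ ‖u - v‖ := norm_nonneg _
  nlinarith [sq_nonneg (a - b), sq_nonneg (a*b), mul_nonneg ha hb,
    mul_nonneg (mul_nonneg ha hb) habs, sq_nonneg (a*b - 1)]
end

section
/- Let α > 0, c > 0. Define I(r,x) = (c²/r) ∫_{x-r}^{x+r} ∫_0^{r²} t^{-1} exp(-α y²/(2t)) dt dy for r > 0 and x ∈ ℝ. Then sup over all x ∈ ℝ and r > 0 of I(r,x) is at most 2√(2π) c²/√α. -/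
open MeasureTheory Real

/-- The local parabolic energy `I(r,x) = (c²/r) ∫_{x-r}^{x+r} ∫_0^{r²} t⁻¹ e^{-αy²/(2t)} dt dy`
of the self-similar solution is uniformly bounded by `2√(2π) c²/√α`. -/
theorem stmt_8 (α c : ℝ) (hα : 0 < α) (hc : 0 < c) (x r : ℝ) (hr : 0 < r) :
    (c ^ 2 / r) * ∫ y in (x - r)..(x + r),
        ∫ t in Set.Ioc (0 : ℝ) (r ^ 2), t⁻¹ * Real.exp (-(α * y ^ 2) / (2 * t)) ≤
      2 * Real.sqrt (2 * Real.pi) * c ^ 2 / Real.sqrt α := by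
  set S := Set.Ioc (0:ℝ) (r^2) with hS
  set g : ℝ × ℝ → ℝ := fun p => p.1⁻¹ * Real.exp (-(α * p.2 ^ 2) / (2 * p.1)) with hg
  have hmeas : AEStronglyMeasurable g (((volume : Measure ℝ).restrict S).prod volume) := by
    apply Measurable.aestronglyMeasurable
    apply (measurable_fst.inv.mul _)
    exact ((((measurable_const.mul (measurable_snd.pow measurable_const)).neg).div
      (measurable_const.mul measurable_fst)).exp)
  have hexp : ∀ t : ℝ, 0 < t → ∀ y : ℝ, -(α * y ^ 2) / (2 * t) = -(α/(2*t)) * y ^ 2 := by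
    intro t ht y; field_simp
  have hb : ∀ t : ℝ, 0 < t → 0 < α / (2 * t) := fun t ht => div_pos hα (by linarith)
  have hint_y : ∀ t : ℝ, 0 < t → Integrable (fun y => g (t, y)) := by
    intro t ht
    have : (fun y => g (t, y)) = fun y => t⁻¹ * Real.exp (-(α/(2*t)) * y ^ 2) := by
      funext y; simp only [hg]; rw [hexp t ht]
    rw [this]
    exact (integrable_exp_neg_mul_sq (hb t ht)).const_mul _
  have hgauss : ∀ t : ℝ, 0 < t → (∫ y : ℝ, g (t, y)) = t⁻¹ * Real.sqrt (π / (α / (2*t))) := by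
    intro t ht
    have : (fun y => g (t, y)) = fun y => t⁻¹ * Real.exp (-(α/(2*t)) * y ^ 2) := by
      funext y; simp only [hg]; rw [hexp t ht]
    rw [this, integral_const_mul, integral_gaussian]
  have hval : ∀ t ∈ S, t⁻¹ * Real.sqrt (π / (α / (2*t))) = Real.sqrt (2*π/α) * t ^ (-(1/2) : ℝ) := by
    intro t ht
    have ht0 : 0 < t := ht.1
    have h1 : π / (α / (2*t)) = (2*π/α) * t := by field_simp
    have h2 : t⁻¹ * Real.sqrt t = t ^ (-(1/2) : ℝ) := by
      rw [Real.sqrt_eq_rpow, ← Real.rpow_neg_one t, ← Real.rpow_add ht0]; norm_num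
    rw [h1, Real.sqrt_mul (by positivity), ← h2]; ring
  have hnng : ∀ t : ℝ, 0 < t → ∀ y : ℝ, 0 ≤ g (t, y) := fun t ht y =>
    mul_nonneg (inv_nonneg.2 ht.le) (Real.exp_nonneg _)
  have hvalint : IntegrableOn (fun t => Real.sqrt (2*π/α) * t ^ (-(1/2) : ℝ)) S := by
    apply Integrable.const_mul
    have := (intervalIntegral.intervalIntegrable_rpow' (a := 0) (b := r^2)
      (r := (-(1/2) : ℝ)) (by norm_num))
    rw [intervalIntegrable_iff_integrableOn_Ioc_of_le (by positivity)] at this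
    exact this
  have hgint : Integrable g (((volume : Measure ℝ).restrict S).prod volume) := by
    rw [integrable_prod_iff hmeas]
    constructor
    · rw [ae_restrict_iff' measurableSet_Ioc]
      exact ae_of_all _ fun t ht => hint_y t ht.1
    · refine hvalint.congr ?_
      rw [Filter.EventuallyEq, ae_restrict_iff' measurableSet_Ioc]
      refine ae_of_all _ fun t ht => ?_
      have ht0 : (0:ℝ) < t := ht.1
      have hnn : ∀ y : ℝ, ‖g (t, y)‖ = g (t, y) := fun y =>
        Real.norm_of_nonneg (hnng t ht0 y)
      simp only [hnn]
      rw [hgauss t ht0, hval t ht]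
  have hf : Integrable (fun y => ∫ t in S, g (t, y)) volume :=
    hgint.integral_prod_right
  have hfnn : 0 ≤ᵐ[volume] fun y => ∫ t in S, g (t, y) :=
    ae_of_all _ fun y => setIntegral_nonneg measurableSet_Ioc fun t ht => hnng t ht.1 y
  have key : (∫ y : ℝ, ∫ t in S, g (t, y)) = 2 * r * Real.sqrt (2*π/α) := by
    have swap := integral_integral_swap (f := fun t y => g (t, y))
      (μ := (volume : Measure ℝ).restrict S) (ν := volume) hgint
    rw [← swap]
    have : (∫ t in S, ∫ y : ℝ, g (t, y)) = ∫ t in S, Real.sqrt (2*π/α) * t ^ (-(1/2) : ℝ) := by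
      apply setIntegral_congr_fun measurableSet_Ioc
      intro t ht
      simp only
      rw [hgauss t ht.1, hval t ht]
    rw [this, integral_const_mul, ← intervalIntegral.integral_of_le (by positivity : (0:ℝ) ≤ r^2),
      integral_rpow (Or.inl (by norm_num))]
    have h0 : ((0:ℝ)) ^ ((-(1/2) : ℝ) + 1) = 0 := by
      rw [Real.zero_rpow (by norm_num)]
    rw [h0]
    have h1 : ((r^2 : ℝ)) ^ ((-(1/2) : ℝ) + 1) = r := by
      norm_num
      rw [← Real.sqrt_eq_rpow, Real.sqrt_sq hr.le]
    rw [h1]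
    ring
  have h1 : (∫ y in (x - r)..(x + r), ∫ t in S, g (t, y)) ≤ 2 * r * Real.sqrt (2*π/α) := by
    rw [intervalIntegral.integral_of_le (by linarith)]
    exact (setIntegral_le_integral hf hfnn).trans key.le
  have h2 := mul_le_mul_of_nonneg_left h1 (by positivity : (0:ℝ) ≤ c^2/r)
  refine h2.trans_eq ?_
  rw [Real.sqrt_div (by positivity : (0:ℝ) ≤ 2*π)]
  have hsa : Real.sqrt α ≠ 0 := by positivity
  field_simp
end

section
/- For c > 0, define m_{c,1}: ℝ × ℝ⁺ → ℝ³ by m_{c,1}(x,t) = (cos(c·Erf(x/√t)), sin(c·Erf(x/√t)), 0), where Erf(s) = ∫_0^s e^{-σ²/4} dσ. Then |m_{c,1}(x,t)| = 1 for all (x,t), and m_{c,1} satisfies the harmonic map heat flow equation ∂_t m = Δm + |∂_x m|² m on ℝ × ℝ⁺ (which is the LLG equation with α = 1, β = 0). -/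
open MeasureTheory

lemma euc3_hasDerivAt {f g h : ℝ → ℝ} {f' g' h' p : ℝ}
    (hf : HasDerivAt f f' p) (hg : HasDerivAt g g' p) (hh : HasDerivAt h h' p) :
    HasDerivAt (fun z => (WithLp.equiv 2 (Fin 3 → ℝ)).symm ![f z, g z, h z])
      ((WithLp.equiv 2 (Fin 3 → ℝ)).symm ![f', g', h']) p := by
  have hp : HasDerivAt (fun z => ![f z, g z, h z]) (![f', g', h'] : Fin 3 → ℝ) p := by
    rw [hasDerivAt_pi]
    intro i
    fin_cases i <;> simpa using ‹_›
  exact ((EuclideanSpace.equiv (Fin 3) ℝ).symm.toContinuousLinearMap.hasFDerivAt).comp_hasDerivAt p hp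

lemma erf_hasDerivAt (Erf : ℝ → ℝ)
    (hErf : ∀ s : ℝ, Erf s = ∫ σ in (0:ℝ)..s, Real.exp (-σ ^ 2 / 4)) (s : ℝ) :
    HasDerivAt Erf (Real.exp (-s ^ 2 / 4)) s := by
  have hcont : Continuous fun σ : ℝ => Real.exp (-σ ^ 2 / 4) := by continuity
  have := intervalIntegral.integral_hasDerivAt_right
    (f := fun σ : ℝ => Real.exp (-σ ^ 2 / 4)) (a := 0) (b := s)
    (hcont.intervalIntegrable _ _)
    hcont.aestronglyMeasurable.stronglyMeasurableAtFilter
    hcont.continuousAt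
  have he : Erf = fun s => ∫ σ in (0:ℝ)..s, Real.exp (-σ ^ 2 / 4) := funext hErf
  rw [he]
  exact this

-- spatial first derivative of u(z) = c Erf(z/r)
lemma spatial1 (c : ℝ) (Erf : ℝ → ℝ)
    (hErf : ∀ s : ℝ, Erf s = ∫ σ in (0:ℝ)..s, Real.exp (-σ ^ 2 / 4))
    (r : ℝ) (hr : 0 < r) (y : ℝ) :
    HasDerivAt (fun z => c * Erf (z / r)) (c * (Real.exp (-(y / r) ^ 2 / 4) * (1 / r))) y := by
  have hq : HasDerivAt (fun z : ℝ => z / r) (1 / r) y := by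
    simpa using (hasDerivAt_id y).div_const r
  exact ((erf_hasDerivAt Erf hErf (y / r)).comp y hq).const_mul c

-- derivative of B(z) = c * (exp(-(z/r)^2/4) * (1/r))
lemma spatial2 (c r : ℝ) (hr : 0 < r) (y : ℝ) :
    HasDerivAt (fun z => c * (Real.exp (-(z / r) ^ 2 / 4) * (1 / r)))
      (c * (Real.exp (-(y / r) ^ 2 / 4) * (1 / r)) * (-y / (2 * r ^ 2))) y := by
  have hq : HasDerivAt (fun z : ℝ => z / r) (1 / r) y := by
    simpa using (hasDerivAt_id y).div_const r
  have hg : HasDerivAt (fun z : ℝ => -(z / r) ^ 2 / 4)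
      (-(2 * (y / r) ^ 1 * (1 / r)) / 4) y := ((hq.pow 2).neg.div_const 4).congr_deriv (by ring)
  have := ((hg.exp.mul_const (1 / r)).const_mul c)
  refine this.congr_deriv ?_
  field_simp
  ring

-- time derivative of s ↦ c Erf(x/√s) at t > 0
lemma timederiv (c : ℝ) (Erf : ℝ → ℝ)
    (hErf : ∀ s : ℝ, Erf s = ∫ σ in (0:ℝ)..s, Real.exp (-σ ^ 2 / 4))
    (x t : ℝ) (ht : 0 < t) :
    HasDerivAt (fun s => c * Erf (x / Real.sqrt s))
      (c * (Real.exp (-(x / Real.sqrt t) ^ 2 / 4) * (1 / Real.sqrt t)) *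
        (-x / (2 * Real.sqrt t ^ 2))) t := by
  have hst : 0 < Real.sqrt t := Real.sqrt_pos.mpr ht
  have hsq : HasDerivAt Real.sqrt (1 / (2 * Real.sqrt t)) t := Real.hasDerivAt_sqrt ht.ne'
  have hinv : HasDerivAt (fun s => (Real.sqrt s)⁻¹)
      (-(1 / (2 * Real.sqrt t)) / Real.sqrt t ^ 2) t := hsq.inv hst.ne'
  have hq : HasDerivAt (fun s => x / Real.sqrt s)
      (x * (-(1 / (2 * Real.sqrt t)) / Real.sqrt t ^ 2)) t := by
    simpa [div_eq_mul_inv] using hinv.const_mul x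
  have := ((erf_hasDerivAt Erf hErf (x / Real.sqrt t)).comp t hq).const_mul c
  refine this.congr_deriv ?_
  field_simp

/-- The explicit self-similar map `m_{c,1}(x,t) = (cos(c Erf(x/√t)), sin(c Erf(x/√t)), 0)`
takes values in the unit sphere and solves the harmonic map heat flow
`∂_t m = ∂_{xx} m + |∂_x m|² m` on `ℝ × ℝ⁺`. -/
theorem stmt_11 (c : ℝ) (hc : 0 < c)
    (Erf : ℝ → ℝ) (hErf : ∀ s : ℝ, Erf s = ∫ σ in (0:ℝ)..s, Real.exp (-σ ^ 2 / 4))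
    (m : ℝ → ℝ → EuclideanSpace ℝ (Fin 3))
    (hm : ∀ x t : ℝ, m x t = (WithLp.equiv 2 (Fin 3 → ℝ)).symm
      ![Real.cos (c * Erf (x / Real.sqrt t)), Real.sin (c * Erf (x / Real.sqrt t)), 0]) :
    (∀ x t : ℝ, 0 < t → ‖m x t‖ = 1) ∧
    (∀ x t : ℝ, 0 < t →
      deriv (fun s => m x s) t =
        deriv (fun y => deriv (fun z => m z t) y) x +
          ‖deriv (fun z => m z t) x‖ ^ 2 • m x t) := by
  constructor
  · intro x t _
    rw [hm, EuclideanSpace.norm_eq]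
    simp only [WithLp.equiv_symm_apply, PiLp.toLp_apply, Fin.sum_univ_three]
    simp [sq_abs]
  · intro x t ht
    have hr : 0 < Real.sqrt t := Real.sqrt_pos.mpr ht
    have hu : ∀ y : ℝ, HasDerivAt (fun z => c * Erf (z / Real.sqrt t))
        (c * (Real.exp (-(y / Real.sqrt t) ^ 2 / 4) * (1 / Real.sqrt t))) y :=
      spatial1 c Erf hErf _ hr
    have hB : ∀ y : ℝ, HasDerivAt
        (fun z => c * (Real.exp (-(z / Real.sqrt t) ^ 2 / 4) * (1 / Real.sqrt t)))
        (c * (Real.exp (-(y / Real.sqrt t) ^ 2 / 4) * (1 / Real.sqrt t)) *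
          (-y / (2 * Real.sqrt t ^ 2))) y :=
      spatial2 c _ hr
    have hfun : (fun z => m z t) = fun z => (WithLp.equiv 2 (Fin 3 → ℝ)).symm
        ![Real.cos (c * Erf (z / Real.sqrt t)), Real.sin (c * Erf (z / Real.sqrt t)), 0] :=
      funext fun z => hm z t
    have hspatial : ∀ y : ℝ, HasDerivAt (fun z => m z t)
        ((WithLp.equiv 2 (Fin 3 → ℝ)).symm
          ![-Real.sin (c * Erf (y / Real.sqrt t)) *
              (c * (Real.exp (-(y / Real.sqrt t) ^ 2 / 4) * (1 / Real.sqrt t))),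
            Real.cos (c * Erf (y / Real.sqrt t)) *
              (c * (Real.exp (-(y / Real.sqrt t) ^ 2 / 4) * (1 / Real.sqrt t))), 0]) y := by
      intro y
      rw [hfun]
      exact euc3_hasDerivAt (hu y).cos (hu y).sin (hasDerivAt_const y (0:ℝ))
    have hd' : (fun y => deriv (fun z => m z t) y) = fun y =>
        (WithLp.equiv 2 (Fin 3 → ℝ)).symm
          ![-Real.sin (c * Erf (y / Real.sqrt t)) *
              (c * (Real.exp (-(y / Real.sqrt t) ^ 2 / 4) * (1 / Real.sqrt t))),
            Real.cos (c * Erf (y / Real.sqrt t)) *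
              (c * (Real.exp (-(y / Real.sqrt t) ^ 2 / 4) * (1 / Real.sqrt t))), 0] :=
      funext fun y => (hspatial y).deriv
    -- second spatial derivative
    have h2nd : HasDerivAt (fun y =>
        (WithLp.equiv 2 (Fin 3 → ℝ)).symm
          ![-Real.sin (c * Erf (y / Real.sqrt t)) *
              (c * (Real.exp (-(y / Real.sqrt t) ^ 2 / 4) * (1 / Real.sqrt t))),
            Real.cos (c * Erf (y / Real.sqrt t)) *
              (c * (Real.exp (-(y / Real.sqrt t) ^ 2 / 4) * (1 / Real.sqrt t))), 0])
        ((WithLp.equiv 2 (Fin 3 → ℝ)).symm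
          ![-(Real.cos (c * Erf (x / Real.sqrt t)) *
               (c * (Real.exp (-(x / Real.sqrt t) ^ 2 / 4) * (1 / Real.sqrt t)))) *
              (c * (Real.exp (-(x / Real.sqrt t) ^ 2 / 4) * (1 / Real.sqrt t))) +
            -Real.sin (c * Erf (x / Real.sqrt t)) *
              (c * (Real.exp (-(x / Real.sqrt t) ^ 2 / 4) * (1 / Real.sqrt t)) *
                (-x / (2 * Real.sqrt t ^ 2))),
            -Real.sin (c * Erf (x / Real.sqrt t)) *
               (c * (Real.exp (-(x / Real.sqrt t) ^ 2 / 4) * (1 / Real.sqrt t))) *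
              (c * (Real.exp (-(x / Real.sqrt t) ^ 2 / 4) * (1 / Real.sqrt t))) +
            Real.cos (c * Erf (x / Real.sqrt t)) *
              (c * (Real.exp (-(x / Real.sqrt t) ^ 2 / 4) * (1 / Real.sqrt t)) *
                (-x / (2 * Real.sqrt t ^ 2))), 0]) x :=
      euc3_hasDerivAt ((hu x).sin.neg.mul (hB x)) ((hu x).cos.mul (hB x))
        (hasDerivAt_const x (0:ℝ))
    -- time derivative
    have hTfun : (fun s => m x s) = fun s => (WithLp.equiv 2 (Fin 3 → ℝ)).symm
        ![Real.cos (c * Erf (x / Real.sqrt s)), Real.sin (c * Erf (x / Real.sqrt s)), 0] :=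
      funext fun s => hm x s
    have hT : HasDerivAt (fun s => (WithLp.equiv 2 (Fin 3 → ℝ)).symm
        ![Real.cos (c * Erf (x / Real.sqrt s)), Real.sin (c * Erf (x / Real.sqrt s)), 0])
        ((WithLp.equiv 2 (Fin 3 → ℝ)).symm
          ![-Real.sin (c * Erf (x / Real.sqrt t)) *
              (c * (Real.exp (-(x / Real.sqrt t) ^ 2 / 4) * (1 / Real.sqrt t)) *
                (-x / (2 * Real.sqrt t ^ 2))),
            Real.cos (c * Erf (x / Real.sqrt t)) *
              (c * (Real.exp (-(x / Real.sqrt t) ^ 2 / 4) * (1 / Real.sqrt t)) *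
                (-x / (2 * Real.sqrt t ^ 2))), 0]) t :=
      euc3_hasDerivAt (timederiv c Erf hErf x t ht).cos (timederiv c Erf hErf x t ht).sin
        (hasDerivAt_const t (0:ℝ))
    have hnorm : ‖deriv (fun z => m z t) x‖ ^ 2 =
        (c * (Real.exp (-(x / Real.sqrt t) ^ 2 / 4) * (1 / Real.sqrt t))) ^ 2 := by
      rw [(hspatial x).deriv, EuclideanSpace.norm_eq, Real.sq_sqrt (by positivity)]
      simp [Fin.sum_univ_three, sq_abs]
      nlinarith [Real.sin_sq_add_cos_sq (c * Erf (x / Real.sqrt t))]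
    rw [hTfun, hT.deriv, hd', h2nd.deriv, hnorm, hm x t]
    ext i
    fin_cases i <;>
      simp [WithLp.equiv_symm_apply, PiLp.toLp_apply] <;> ring
end

section
/- Let α ∈ (0,1), β = √(1−α²), c ∈ ℂ \ {0}, and define w(x,t) = (c/√t) exp( i(β|c|²/2) ln t + (iβ − α) x²/(4t) ). Then there is no tempered distribution T such that w(·,t) → T in S'(ℝ) as t → 0⁺; i.e., w(·,t) does not converge in the space of tempered distributions as t → 0⁺. -/
open Complex Polynomial Finset MeasureTheory Filter
open Complex Polynomial

noncomputable def gfun : ℝ → ℂ := fun x => Complex.exp (-(x:ℂ)^2)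

lemma gfun_smooth : ContDiff ℝ ((⊤:ℕ∞) : WithTop ℕ∞) gfun := by
  have h1 : ContDiff ℝ ((⊤:ℕ∞) : WithTop ℕ∞) (fun x : ℝ => -(x:ℂ)^2) :=
    ((Complex.ofRealCLM.contDiff.pow 2).neg)
  exact Complex.contDiff_exp.comp h1

lemma gfun_iteratedDeriv (n : ℕ) :
    ∃ p : Polynomial ℂ, ∀ x : ℝ, iteratedDeriv n gfun x = p.eval (x:ℂ) * Complex.exp (-(x:ℂ)^2) := by
  induction n with
  | zero => exact ⟨1, fun x => by simp [gfun]⟩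
  | succ n ih =>
    obtain ⟨p, hp⟩ := ih
    refine ⟨derivative p - C 2 * X * p, fun x => ?_⟩
    have hfun : iteratedDeriv n gfun = fun y : ℝ => p.eval (y:ℂ) * Complex.exp (-(y:ℂ)^2) :=
      funext hp
    rw [iteratedDeriv_succ, hfun]
    have h1 : HasDerivAt (fun y : ℝ => p.eval (y:ℂ)) (p.derivative.eval (x:ℂ)) x :=
      (p.hasDerivAt (x:ℂ)).comp_ofReal
    have h2 : HasDerivAt (fun z : ℂ => Complex.exp (-z^2))
        (Complex.exp (-(x:ℂ)^2) * (-(2 * (x:ℂ)))) (x:ℂ) := by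
      have := ((hasDerivAt_pow 2 (x:ℂ)).neg).cexp
      simpa using this
    have h2' : HasDerivAt (fun y : ℝ => Complex.exp (-(y:ℂ)^2))
        (Complex.exp (-(x:ℂ)^2) * (-(2 * (x:ℂ)))) x := h2.comp_ofReal
    have h3 := h1.mul h2'
    rw [show (fun y : ℝ => p.eval (y:ℂ) * Complex.exp (-(y:ℂ)^2)) = ((fun y : ℝ => p.eval (y:ℂ)) * fun y : ℝ => Complex.exp (-(y:ℂ)^2)) from rfl, h3.deriv]
    simp only [Polynomial.eval_sub, Polynomial.eval_mul, Polynomial.eval_C, Polynomial.eval_X]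
    ring
open Complex Polynomial Finset

lemma pow_mul_exp_neg_sq_le (j : ℕ) (x : ℝ) :
    |x| ^ j * Real.exp (-x^2) ≤ 1 + (j.factorial : ℝ) := by
  rcases le_or_gt |x| 1 with h | h
  · have h1 : |x| ^ j ≤ 1 := pow_le_one₀ (abs_nonneg x) h
    have h2 : Real.exp (-x^2) ≤ 1 := Real.exp_le_one_iff.2 (by simp [sq_nonneg x])
    nlinarith [Real.exp_pos (-x^2), pow_nonneg (abs_nonneg x) j, (show (0:ℝ) ≤ j.factorial from Nat.cast_nonneg _)]
  · have hx2 : (0:ℝ) ≤ x^2 := sq_nonneg x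
    have key : (x^2)^j / (j.factorial : ℝ) ≤ Real.exp (x^2) := by
      have hsum := Real.sum_le_exp_of_nonneg hx2 (j+1)
      refine le_trans ?_ hsum
      have heq : (x^2)^j / (j.factorial : ℝ) = ∑ i ∈ {j}, (x^2)^i / (i.factorial : ℝ) := by simp
      rw [heq]
      apply Finset.sum_le_sum_of_subset_of_nonneg
      · simp
      · intro i _ _; positivity
    have hexp : Real.exp (-x^2) = (Real.exp (x^2))⁻¹ := by rw [Real.exp_neg]
    have hfac : (0:ℝ) < j.factorial := Nat.cast_pos.2 j.factorial_pos
    have hxpow : (0:ℝ) < |x| ^ j := pow_pos (by linarith) j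
    have hx2pos : (0:ℝ) < (x^2)^j := pow_pos (by nlinarith [_root_.sq_abs x]) j
    have hle : Real.exp (-x^2) ≤ (j.factorial : ℝ) / (x^2)^j := by
      rw [hexp, inv_le_iff_one_le_mul₀ (Real.exp_pos _), div_mul_eq_mul_div, le_div_iff₀ hx2pos]
      calc (1:ℝ) * (x^2)^j = (x^2)^j / (j.factorial:ℝ) * (j.factorial:ℝ) := by field_simp
        _ ≤ Real.exp (x^2) * (j.factorial:ℝ) := mul_le_mul_of_nonneg_right key hfac.le
        _ = (j.factorial:ℝ) * Real.exp (x^2) := by ring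
    have hsq : (x^2)^j = |x|^j * |x|^j := by
      rw [← _root_.sq_abs x, ← pow_mul, ← pow_add]; ring_nf
    have hone : (1:ℝ) ≤ |x| ^ j := one_le_pow₀ h.le
    calc |x|^j * Real.exp (-x^2) ≤ |x|^j * ((j.factorial:ℝ) / (x^2)^j) :=
          mul_le_mul_of_nonneg_left hle hxpow.le
      _ = (j.factorial:ℝ) / |x|^j := by rw [hsq]; field_simp
      _ ≤ (j.factorial:ℝ) := by
          rw [div_le_iff₀ hxpow]; nlinarith
      _ ≤ 1 + (j.factorial:ℝ) := by linarith

lemma gfun_norm_exp (x : ℝ) : ‖Complex.exp (-(x:ℂ)^2)‖ = Real.exp (-x^2) := by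
  rw [Complex.norm_exp]
  rw [neg_re, ← Complex.ofReal_pow, Complex.ofReal_re]

noncomputable def gaussSchwartz : SchwartzMap ℝ ℂ := by
  refine ⟨gfun, gfun_smooth, ?_⟩
  intro k n
  obtain ⟨p, hp⟩ := gfun_iteratedDeriv n
  set d := p.natDegree
  refine ⟨∑ i ∈ range (d+1), ‖p.coeff i‖ * (1 + ((k+i).factorial : ℝ)), fun x => ?_⟩
  rw [norm_iteratedFDeriv_eq_norm_iteratedDeriv, hp, norm_mul, gfun_norm_exp]
  have hnorm : ‖x‖ = |x| := rfl
  have hpev : ‖p.eval (x:ℂ)‖ ≤ ∑ i ∈ range (d+1), ‖p.coeff i‖ * |x|^i := by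
    rw [Polynomial.eval_eq_sum_range]
    refine le_trans (norm_sum_le _ _) (Finset.sum_le_sum fun i _ => ?_)
    rw [norm_mul]
    gcongr
    rw [norm_pow]
    simp [Complex.norm_real]
  calc ‖x‖^k * (‖p.eval (x:ℂ)‖ * Real.exp (-x^2))
      ≤ |x|^k * ((∑ i ∈ range (d+1), ‖p.coeff i‖ * |x|^i) * Real.exp (-x^2)) := by
        rw [hnorm]
        have h2 : (0:ℝ) ≤ |x|^k := pow_nonneg (abs_nonneg x) k
        exact mul_le_mul_of_nonneg_left
          (mul_le_mul_of_nonneg_right hpev (Real.exp_pos _).le) h2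
    _ = ∑ i ∈ range (d+1), ‖p.coeff i‖ * (|x|^(k+i) * Real.exp (-x^2)) := by
        rw [Finset.sum_mul, Finset.mul_sum]
        refine Finset.sum_congr rfl fun i _ => ?_
        rw [pow_add]; ring
    _ ≤ ∑ i ∈ range (d+1), ‖p.coeff i‖ * (1 + ((k+i).factorial : ℝ)) := by
        refine Finset.sum_le_sum fun i _ => ?_
        exact mul_le_mul_of_nonneg_left (pow_mul_exp_neg_sq_le (k+i) x) (norm_nonneg _)

lemma gaussSchwartz_apply (x : ℝ) : gaussSchwartz x = Complex.exp (-(x:ℂ)^2) := rfl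

-- Gaussian integral step
lemma key_integral (α β t : ℝ) (ht : 0 < t) (hα : 0 < α) (γ : ℝ) (c : ℂ) :
    ∫ x : ℝ, ((c / (Real.sqrt t : ℂ)) *
      Complex.exp (Complex.I * (γ:ℂ) * (Real.log t : ℂ) +
        (Complex.I * β - α) * (x:ℂ) ^ 2 / (4 * t)) * gaussSchwartz x)
    = (c / (Real.sqrt t : ℂ)) * Complex.exp (Complex.I * (γ:ℂ) * (Real.log t : ℂ))
      * ((Real.pi : ℂ) / (1 + ((α:ℂ) - Complex.I * β) / (4 * (t:ℂ)))) ^ ((1:ℂ)/2) := by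
  set b : ℂ := 1 + ((α:ℂ) - Complex.I * β) / (4 * (t:ℂ)) with hb
  have ht' : (t:ℂ) ≠ 0 := Complex.ofReal_ne_zero.2 ht.ne'
  have hbre : 0 < b.re := by
    have hbeq : b = ((1 + α / (4*t) : ℝ) : ℂ) + ((-(β / (4*t)) : ℝ) : ℂ) * Complex.I := by
      rw [hb]; push_cast; field_simp; ring
    rw [hbeq]
    simp
    have r1 : ((α/(4*t):ℝ):ℂ) = (α:ℂ)/(4*(t:ℂ)) := by push_cast; ring
    have r2 : ((β/(4*t):ℝ):ℂ) = (β:ℂ)/(4*(t:ℂ)) := by push_cast; ring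
    rw [← r1, ← r2, Complex.ofReal_re, Complex.ofReal_im]
    positivity
  have hpt : ∀ x : ℝ, (c / (Real.sqrt t : ℂ)) *
      Complex.exp (Complex.I * (γ:ℂ) * (Real.log t : ℂ) +
        (Complex.I * β - α) * (x:ℂ) ^ 2 / (4 * t)) * gaussSchwartz x
      = (c / (Real.sqrt t : ℂ)) * Complex.exp (Complex.I * (γ:ℂ) * (Real.log t : ℂ)) *
        Complex.exp (-b * (x:ℂ)^2) := by
    intro x
    have e1 : ∀ (q u v : ℂ), q * Complex.exp u * Complex.exp v = q * Complex.exp (u + v) :=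
      fun q u v => by rw [mul_assoc, ← Complex.exp_add]
    rw [gaussSchwartz_apply, e1, e1]
    congr 2
    rw [hb]; field_simp; ring
  simp only [hpt]
  rw [MeasureTheory.integral_const_mul, integral_gaussian_complex hbre]

lemma den_ne (α β t : ℝ) (ht : 0 ≤ t) (hα : 0 < α) :
    (4*(t:ℂ) + (α:ℂ) - Complex.I * β) ≠ 0 := by
  intro h
  have := congrArg Complex.re h
  simp [Complex.mul_re] at this
  linarith

lemma square_eq (α β t : ℝ) (ht : 0 < t) (hα : 0 < α) (γ : ℝ) (c : ℂ) :
    ((c / (Real.sqrt t : ℂ)) * Complex.exp (Complex.I * (γ:ℂ) * (Real.log t : ℂ))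
      * ((Real.pi : ℂ) / (1 + ((α:ℂ) - Complex.I * β) / (4 * (t:ℂ)))) ^ ((1:ℂ)/2))^2
    = (4*(Real.pi:ℂ)*c^2/(4*(t:ℂ) + (α:ℂ) - Complex.I * β))
      * Complex.exp (Complex.I * (γ:ℂ) * (Real.log t : ℂ))^2 := by
  set b : ℂ := 1 + ((α:ℂ) - Complex.I * β) / (4 * (t:ℂ)) with hb
  have ht' : (t:ℂ) ≠ 0 := Complex.ofReal_ne_zero.2 ht.ne'
  have hden : (4*(t:ℂ) + (α:ℂ) - Complex.I * β) ≠ 0 := den_ne α β t ht.le hα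
  have hbne : b ≠ 0 := by
    rw [hb]
    intro h
    apply hden
    have : ((α:ℂ) - Complex.I * β) / (4 * (t:ℂ)) = -1 := by
      have := congrArg (fun z => z - 1) h; simpa using this
    have h2 : (α:ℂ) - Complex.I * β = -(4*(t:ℂ)) := by
      field_simp at this; linear_combination this
    rw [sub_eq_iff_eq_add] at h2 ⊢
    rw [h2]; ring
  have hπb : (Real.pi:ℂ)/b ≠ 0 :=
    div_ne_zero (Complex.ofReal_ne_zero.2 Real.pi_ne_zero) hbne
  have hsq : (((Real.pi:ℂ)/b)^((1:ℂ)/2))^2 = (Real.pi:ℂ)/b := by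
    rw [sq, ← Complex.cpow_add _ _ hπb]
    norm_num
  have hst : ((Real.sqrt t : ℝ):ℂ)^2 = (t:ℂ) := by
    rw [← Complex.ofReal_pow, Real.sq_sqrt ht.le]
  have hbrep : b = (4*(t:ℂ) + (α:ℂ) - Complex.I*β)/(4*(t:ℂ)) := by
    rw [hb]; field_simp; ring
  rw [mul_pow, mul_pow, hsq, div_pow, hst, hbrep, div_div_eq_mul_div]
  field_simp

/-- The singular solution `w(x,t) = (c/√t) exp(i(β|c|²/2) ln t + (iβ−α)x²/(4t))`
does not converge in the space of tempered distributions as `t → 0⁺`: there is no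
assignment `T` of values on Schwartz functions such that `∫ w(x,t)φ(x) dx → T φ`
for every Schwartz function `φ`. -/
theorem stmt_16 (α β : ℝ) (hα : α ∈ Set.Ioo (0:ℝ) 1) (hβ : β = Real.sqrt (1 - α ^ 2))
    (c : ℂ) (hc : c ≠ 0)
    (w : ℝ → ℝ → ℂ)
    (hw : ∀ (x t : ℝ), 0 < t → w x t = (c / (Real.sqrt t : ℂ)) *
      Complex.exp (Complex.I * (β * ‖c‖ ^ 2 / 2) * Real.log t +
        (Complex.I * β - α) * x ^ 2 / (4 * t))) :
    ¬ ∃ T : SchwartzMap ℝ ℂ → ℂ, ∀ φ : SchwartzMap ℝ ℂ,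
      Tendsto (fun t : ℝ => ∫ x : ℝ, w x t * φ x)
        (nhdsWithin 0 (Set.Ioi 0)) (nhds (T φ)) := by
  rintro ⟨T, hT⟩
  obtain ⟨hα0, hα1⟩ := hα
  have hβpos : 0 < β := hβ ▸ Real.sqrt_pos.2 (by nlinarith)
  have habs : 0 < ‖c‖ := norm_pos_iff.2 hc
  set γ : ℝ := β * ‖c‖^2 / 2 with hγ
  have hγpos : 0 < γ := by positivity
  have hT' := hT gaussSchwartz
  set L := T gaussSchwartz with hL
  set F : ℝ → ℂ := fun t => ∫ x : ℝ, w x t * gaussSchwartz x with hF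
  have hFval : ∀ t : ℝ, 0 < t → (F t)^2 =
      (4*(Real.pi:ℂ)*c^2/(4*(t:ℂ) + (α:ℂ) - Complex.I * β))
      * Complex.exp (Complex.I * (γ:ℂ) * (Real.log t : ℂ))^2 := by
    intro t ht
    have hrw : (fun x : ℝ => w x t * gaussSchwartz x)
        = fun x : ℝ => ((c / (Real.sqrt t : ℂ)) *
          Complex.exp (Complex.I * (γ:ℂ) * (Real.log t : ℂ) +
            (Complex.I * β - α) * (x:ℂ) ^ 2 / (4 * t)) * gaussSchwartz x) := by
      funext x
      rw [hw x t ht]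
      norm_cast
    have hint : F t = (c / (Real.sqrt t : ℂ)) *
        Complex.exp (Complex.I * (γ:ℂ) * (Real.log t : ℂ))
        * ((Real.pi : ℂ) / (1 + ((α:ℂ) - Complex.I * β) / (4 * (t:ℂ)))) ^ ((1:ℂ)/2) := by
      rw [hF]
      simp only [hrw]
      exact key_integral α β t ht hα0 γ c
    rw [hint, square_eq α β t ht hα0 γ c]
  set M : ℝ → ℂ := fun t => 4*(Real.pi:ℂ)*c^2/(4*(t:ℂ) + (α:ℂ) - Complex.I * β) with hM
  have hM0ne : M 0 ≠ 0 := by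
    rw [hM]
    refine div_ne_zero ?_ (den_ne α β 0 le_rfl hα0)
    have : (Real.pi:ℂ) ≠ 0 := Complex.ofReal_ne_zero.2 Real.pi_ne_zero
    exact mul_ne_zero (mul_ne_zero (by norm_num) this) (pow_ne_zero 2 hc)
  have hMcont : Tendsto M (nhds 0) (nhds (M 0)) := by
    rw [hM]
    exact tendsto_const_nhds.div
      ((by continuity : Continuous fun t : ℝ => 4*(t:ℂ) + (α:ℂ) - Complex.I * β).tendsto 0)
      (den_ne α β 0 le_rfl hα0)
  set u : ℕ → ℝ := fun n => Real.exp (-(Real.pi*n)/γ) with hu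
  set v : ℕ → ℝ := fun n => Real.exp (-(Real.pi*n + Real.pi/2)/γ) with hv
  have harg : ∀ (a b : ℝ), 0 < a → Tendsto (fun n : ℕ => -(a*n + b)/γ) atTop atBot := by
    intro a b ha
    have h1 : Tendsto (fun n : ℕ => (n:ℝ)) atTop atTop := tendsto_natCast_atTop_atTop
    have h2 : Tendsto (fun n : ℕ => (n:ℝ) * (-(a/γ)) + (-(b/γ))) atTop atBot :=
      (h1.atTop_mul_const_of_neg (by rw [neg_neg_iff_pos]; positivity)).atBot_add tendsto_const_nhds
    refine h2.congr fun n => ?_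
    field_simp
    ring
  have hu0 : Tendsto u atTop (nhds 0) := by
    have := Real.tendsto_exp_atBot.comp (harg Real.pi 0 Real.pi_pos)
    refine this.congr fun n => ?_
    rw [hu]; simp [Function.comp]
  have hv0 : Tendsto v atTop (nhds 0) := by
    have := Real.tendsto_exp_atBot.comp (harg Real.pi (Real.pi/2) Real.pi_pos)
    refine this.congr fun n => ?_
    rw [hv]; simp [Function.comp]
  have huin : ∀ n, u n ∈ Set.Ioi (0:ℝ) := fun n => Real.exp_pos _
  have hvin : ∀ n, v n ∈ Set.Ioi (0:ℝ) := fun n => Real.exp_pos _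
  have huW : Tendsto u atTop (nhdsWithin 0 (Set.Ioi 0)) :=
    tendsto_nhdsWithin_iff.2 ⟨hu0, Eventually.of_forall huin⟩
  have hvW : Tendsto v atTop (nhdsWithin 0 (Set.Ioi 0)) :=
    tendsto_nhdsWithin_iff.2 ⟨hv0, Eventually.of_forall hvin⟩
  have hγ' : (γ:ℂ) ≠ 0 := Complex.ofReal_ne_zero.2 hγpos.ne'
  have hEu : ∀ n : ℕ, Complex.exp (Complex.I * (γ:ℂ) * (Real.log (u n) : ℂ))^2 = 1 := by
    intro n
    rw [sq, ← Complex.exp_add]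
    have harg2 : Complex.I * (γ:ℂ) * (Real.log (u n) : ℂ)
        + Complex.I * (γ:ℂ) * (Real.log (u n) : ℂ)
        = ((-(n:ℤ) : ℤ):ℂ) * (2*(Real.pi:ℂ)*Complex.I) := by
      rw [hu]
      simp only [Real.log_exp]
      push_cast
      field_simp
      ring
    rw [harg2, Complex.exp_int_mul_two_pi_mul_I]
  have hEv : ∀ n : ℕ, Complex.exp (Complex.I * (γ:ℂ) * (Real.log (v n) : ℂ))^2 = -1 := by
    intro n
    rw [sq, ← Complex.exp_add]
    have harg2 : Complex.I * (γ:ℂ) * (Real.log (v n) : ℂ)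
        + Complex.I * (γ:ℂ) * (Real.log (v n) : ℂ)
        = ((-(n:ℤ) : ℤ):ℂ) * (2*(Real.pi:ℂ)*Complex.I) + (-((Real.pi:ℂ) * Complex.I)) := by
      rw [hv]
      simp only [Real.log_exp]
      push_cast
      field_simp
      ring
    rw [harg2, Complex.exp_add, Complex.exp_int_mul_two_pi_mul_I, one_mul,
      Complex.exp_neg, Complex.exp_pi_mul_I]
    norm_num
  have limu : Tendsto (fun n => (F (u n))^2) atTop (nhds (L^2)) := (hT'.comp huW).pow 2
  have limv : Tendsto (fun n => (F (v n))^2) atTop (nhds (L^2)) := (hT'.comp hvW).pow 2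
  have equ : (fun n => (F (u n))^2) = fun n => M (u n) := by
    funext n
    rw [hFval (u n) (huin n), hEu n, mul_one]
  have eqv : (fun n => (F (v n))^2) = fun n => -(M (v n)) := by
    funext n
    rw [hFval (v n) (hvin n), hEv n]
    ring
  have limu' : Tendsto (fun n => M (u n)) atTop (nhds (L^2)) := by rw [← equ]; exact limu
  have e1 : L^2 = M 0 := tendsto_nhds_unique limu' ((hMcont.comp hu0) : Tendsto (fun n => M (u n)) atTop (nhds (M 0)))
  have limv' : Tendsto (fun n => -(M (v n))) atTop (nhds (L^2)) := by rw [show (fun n => -(M (v n))) = fun n => (F (v n))^2 from eqv.symm]; exact limv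
  have e2 : L^2 = -(M 0) := tendsto_nhds_unique limv' (((hMcont.comp hv0) : Tendsto (fun n => M (v n)) atTop (nhds (M 0))).neg)
  apply hM0ne
  have : M 0 = -(M 0) := e1 ▸ e2
  linear_combination this / 2
end
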